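/- For a sequence of t+n independent fair coin bits, the probability that there exists a (2n−1)-long repeat—i.e., positions i < j with (C_i,…,C_{i+2n−2}) = (C_j,…,C_{j+2n−2})—is at most 2t²/2^{2n}. -/
import Mathlib


lemma window_count (n t i j : ℕ) (hij : i < j) (hjn : j + (2*n-1) ≤ t + n)
    (s : Finset (Fin (t + n) → Bool))
    (hs : ∀ C ∈ s, ∀ ℓ ∈ Finset.range (2*n-1),
      (if h : i + ℓ < t + n then C ⟨i+ℓ, h⟩ else false)
      = (if h : j + ℓ < t + n then C ⟨j+ℓ, h⟩ else false)) :
    s.card ≤ 2 ^ (t + n - (2*n-1)) := by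
  classical
  set k := 2*n-1 with hk
  set T : Finset (Fin (t+n)) :=
    Finset.univ.filter (fun a : Fin (t+n) => j ≤ a.val ∧ a.val < j + k) with hT
  set S : Finset (Fin (t+n)) :=
    Finset.univ.filter (fun a : Fin (t+n) => ¬ (j ≤ a.val ∧ a.val < j + k)) with hS
  have hTcard : T.card = k := by
    have h1 : T.card = (Finset.Ico j (j+k)).card := by
      apply Finset.card_bij (fun a _ => a.val)
      · intro a ha
        simp only [hT, Finset.mem_filter] at ha
        simp only [Finset.mem_Ico]
        omega
      · intro a _ b _ h
        exact Fin.val_injective h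
      · intro b hb
        simp only [Finset.mem_Ico] at hb
        refine ⟨⟨b, by omega⟩, ?_, rfl⟩
        simp only [hT, Finset.mem_filter, Finset.mem_univ, true_and]
        exact ⟨hb.1, hb.2⟩
    rw [h1, Nat.card_Ico]
    omega
  have hScard : S.card = t + n - k := by
    have h2 : S = Finset.univ \ T := Finset.filter_not _ _
    rw [h2, Finset.card_sdiff_of_subset (Finset.filter_subset _ _), hTcard, Finset.card_univ,
      Fintype.card_fin]
  have hinj : Set.InjOn (fun (C : Fin (t+n) → Bool) (a : {x // x ∈ S}) => C a.1) ↑s := by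
    intro C1 h1 C2 h2 hf
    have h1' := hs C1 (Finset.mem_coe.mp h1)
    have h2' := hs C2 (Finset.mem_coe.mp h2)
    have H : ∀ m, ∀ h : m < t + n, C1 ⟨m, h⟩ = C2 ⟨m, h⟩ := by
      intro m
      induction m using Nat.strong_induction_on with
      | _ m IH =>
        intro hm
        by_cases hmem : j ≤ m ∧ m < j + k
        · obtain ⟨hjm, hmk⟩ := hmem
          have hℓk : m - j ∈ Finset.range k := by simp only [Finset.mem_range]; omega
          have e1 := h1' (m - j) hℓk
          have e2 := h2' (m - j) hℓk
          have hjℓ : j + (m - j) = m := by omega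
          have hiℓ : i + (m - j) < t + n := by omega
          rw [hjℓ, dif_pos hm, dif_pos hiℓ] at e1 e2
          rw [← e1, ← e2]
          exact IH (i + (m - j)) (by omega) hiℓ
        · have haS : (⟨m, hm⟩ : Fin (t+n)) ∈ S := by
            simp only [hS, Finset.mem_filter, Finset.mem_univ, true_and]
            exact hmem
          exact congrFun hf ⟨⟨m, hm⟩, haS⟩
    funext a
    have := H a.1 a.2
    simpa using this
  calc s.card ≤ (Finset.univ : Finset ({x // x ∈ S} → Bool)).card :=
        Finset.card_le_card_of_injOn _ (fun _ _ => Finset.mem_univ _) hinj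
    _ = 2 ^ (t + n - k) := by
        rw [Finset.card_univ, Fintype.card_fun]
        simp [hScard]


open scoped Classical in
/-- For `t+n` independent fair coin bits, the probability that there is a
`(2n−1)`-long repeat (positions `i < j` with the two `(2n−1)`-windows equal
and fitting in the sequence) is at most `2 t² / 2^{2n}`: the number of such
bit strings, times `2^{2n}`, is at most `2 t² · 2^{t+n}`. -/
theorem stmt19 (n t : ℕ) :
    ((Finset.univ : Finset (Fin (t + n) → Bool)).filter
        (fun C : Fin (t + n) → Bool =>
          let D : ℕ → Bool := fun a => if h : a < t + n then C ⟨a, h⟩ else false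
          ∃ j ∈ Finset.range (t + n), ∃ i ∈ Finset.range j,
            j + (2 * n - 1) ≤ t + n ∧
            ∀ ℓ ∈ Finset.range (2 * n - 1), D (i + ℓ) = D (j + ℓ))).card
        * 2 ^ (2 * n)
      ≤ 2 * t ^ 2 * 2 ^ (t + n) := by
  by_cases hfit : 2 * n - 1 ≤ t + n
  swap
  · refine Nat.le_trans (Nat.mul_le_mul_right (2^(2*n)) (Nat.le_zero.mpr ?_)) (by simp)
    rw [Finset.card_eq_zero, Finset.eq_empty_iff_forall_notMem]
    intro C hC
    simp only [Finset.mem_filter] at hC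
    obtain ⟨-, j, hj, i, hi, hcond, -⟩ := hC
    omega
  rcases Nat.eq_zero_or_pos n with hn | hn
  · subst hn
    rcases Nat.lt_or_ge t 2 with ht | ht
    · refine Nat.le_trans (Nat.mul_le_mul_right (2^(2*0)) (Nat.le_zero.mpr ?_)) (by simp)
      rw [Finset.card_eq_zero, Finset.eq_empty_iff_forall_notMem]
      intro C hC
      simp only [Finset.mem_filter] at hC
      obtain ⟨-, j, hj, i, hi, -, -⟩ := hC
      simp only [Finset.mem_range] at hj hi
      omega
    · refine Nat.le_trans (Nat.mul_le_mul_right _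
        (Finset.card_le_card (fun C _ => Finset.mem_univ C))) ?_
      have huniv : (Finset.univ : Finset (Fin (t+0) → Bool)).card = 2 ^ (t+0) := by
        rw [Finset.card_univ, Fintype.card_fun]; simp
      rw [huniv]
      calc 2^(t+0) * 2^(2*0) = 1 * (2^(t+0)) := by ring
        _ ≤ 2 * t^2 * 2^(t+0) := Nat.mul_le_mul_right _ (by nlinarith)
  -- main case : n ≥ 1
  set pairs := (Finset.range (t+n)).sigma (fun j => Finset.range j) with hpairs
  set Q : (Σ _ : ℕ, ℕ) → (Fin (t+n) → Bool) → Prop := fun p C =>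
    p.1 + (2*n-1) ≤ t + n ∧ ∀ ℓ ∈ Finset.range (2*n-1),
      (if h : p.2 + ℓ < t + n then C ⟨p.2+ℓ, h⟩ else false)
      = (if h : p.1 + ℓ < t + n then C ⟨p.1+ℓ, h⟩ else false) with hQ
  have hcard : ∀ p ∈ pairs, (Finset.univ.filter (Q p)).card
      ≤ if p.1 + (2*n-1) ≤ t + n then 2 ^ (t + n - (2*n-1)) else 0 := by
    intro p hp
    simp only [hpairs, Finset.mem_sigma, Finset.mem_range] at hp
    split_ifs with hc
    · refine window_count n t p.2 p.1 hp.2 hc _ ?_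
      intro C hC
      simp only [Finset.mem_filter, hQ] at hC
      exact hC.2.2
    · simp only [Nat.le_zero, Finset.card_eq_zero, Finset.eq_empty_iff_forall_notMem]
      intro C hC
      simp only [Finset.mem_filter, hQ] at hC
      exact hc hC.2.1
  calc _ ≤ (pairs.biUnion (fun p => Finset.univ.filter (Q p))).card * 2 ^ (2*n) := by
        refine Nat.mul_le_mul_right _ (Finset.card_le_card ?_)
        intro C hC
        simp only [Finset.mem_filter] at hC
        obtain ⟨-, j, hj, i, hi, hcond, hwin⟩ := hC
        rw [Finset.mem_biUnion]
        refine ⟨⟨j, i⟩, Finset.mem_sigma.mpr ⟨hj, hi⟩, ?_⟩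
        simp only [Finset.mem_filter, hQ]
        exact ⟨Finset.mem_univ _, hcond, hwin⟩
    _ ≤ (∑ p ∈ pairs, (Finset.univ.filter (Q p)).card) * 2 ^ (2*n) :=
        Nat.mul_le_mul_right _ Finset.card_biUnion_le
    _ ≤ (∑ p ∈ pairs, if p.1 + (2*n-1) ≤ t + n then 2 ^ (t + n - (2*n-1)) else 0)
          * 2 ^ (2*n) :=
        Nat.mul_le_mul_right _ (Finset.sum_le_sum hcard)
    _ = (∑ j ∈ Finset.range (t+n), ∑ _i ∈ Finset.range j,
          (if j + (2*n-1) ≤ t + n then 2 ^ (t + n - (2*n-1)) else 0)) * 2 ^ (2*n) := by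
        rw [hpairs, Finset.sum_sigma]
    _ = (∑ j ∈ Finset.range (t+n),
          (if j + (2*n-1) ≤ t + n then j * 2 ^ (t + n - (2*n-1)) else 0)) * 2 ^ (2*n) := by
        congr 1
        apply Finset.sum_congr rfl
        intro j _
        rw [Finset.sum_const, Finset.card_range, smul_eq_mul]
        split_ifs <;> simp
    _ ≤ (∑ j ∈ Finset.range (t+n),
          (if j + (2*n-1) ≤ t + n ∧ 1 ≤ j then t * 2 ^ (t + n - (2*n-1)) else 0))
          * 2 ^ (2*n) := by
        refine Nat.mul_le_mul_right _ (Finset.sum_le_sum ?_)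
        intro j _
        split_ifs with h1 h2 h2
        · exact Nat.mul_le_mul_right _ (by omega)
        · simp only [not_and, not_le] at h2
          have hj0 : j = 0 := by omega
          simp [hj0]
        · omega
        · exact le_rfl
    _ = ((Finset.range (t+n)).filter (fun j => j + (2*n-1) ≤ t + n ∧ 1 ≤ j)).card
          * (t * 2 ^ (t + n - (2*n-1))) * 2 ^ (2*n) := by
        rw [← Finset.sum_filter, Finset.sum_const, smul_eq_mul]
    _ ≤ t * (t * 2 ^ (t + n - (2*n-1))) * 2 ^ (2*n) := by
        refine Nat.mul_le_mul_right _ (Nat.mul_le_mul_right _ ?_)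
        calc _ ≤ (Finset.Icc 1 t).card := by
              apply Finset.card_le_card
              intro j hj
              simp only [Finset.mem_filter, Finset.mem_range] at hj
              simp only [Finset.mem_Icc]
              omega
          _ = t := by simp
    _ = t^2 * (2 ^ (t + n - (2*n-1)) * 2 ^ (2*n)) := by ring
    _ = t^2 * (2 * 2 ^ (t+n)) := by
        rw [← pow_add, show t + n - (2*n-1) + 2*n = (t+n) + 1 by omega, pow_succ]
        ring
    _ = 2 * t ^ 2 * 2 ^ (t + n) := by ring
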